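/- Let P, Q, f, g be real polynomials with deg f = m, deg g = n, deg P = m + 1, satisfying 2·Q·f = 2·Q·P' + P·Q' and 2·Q·g = Q'·(P² - Q), such that all complex roots of Q are real. Let a < b be simple roots of Q with Q > 0 on (a, b) and P² - Q < 0 on (a, b), and suppose f(α) ≠ 0 for every α ∈ (a, b) with Q'(α) = 0. For s ∈ ℝ set P̃_s(x) = P(x)·(x - s) and Q̃_s(x) = Q(x)·(x - s)². Then for all sufficiently large s: there exist real polynomials f̃_s of degree m + 1 and g̃_s of degree n + 2 with 2·Q̃_s·f̃_s = 2·Q̃_s·P̃_s' + P̃_s·Q̃_s' and 2·Q̃_s·g̃_s = Q̃_s'·(P̃_s² - Q̃_s); all complex roots of Q̃_s are real; a and b are simple roots of Q̃_s with Q̃_s > 0 on (a, b) and P̃_s² - Q̃_s < 0 on (a, b); and f̃_s(α̃) ≠ 0 for every α̃ ∈ (a, b) with Q̃_s'(α̃) = 0. -/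

import Mathlib

open Polynomial

/-- Lemma 9 (key step): from a hyperelliptic-limit-cycle configuration for a Liénard
system of type `(m,n)` over an interval `[a,b]`, the substitution
`P̃ₛ = P·(x-s)`, `Q̃ₛ = Q·(x-s)²` yields, for all sufficiently large `s`, a
configuration of type `(m+1, n+2)` over the same interval. -/
theorem lift_to_higher_type
    (m n : ℕ) (P Q f g : ℝ[X])
    (hf : f.degree = (m : ℕ)) (hg : g.degree = (n : ℕ))
    (hP : P.degree = ((m + 1 : ℕ) : WithBot ℕ))
    (hid1 : 2 * Q * f = 2 * Q * derivative P + P * derivative Q)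
    (hid2 : 2 * Q * g = derivative Q * (P ^ 2 - Q))
    (hreal : ∀ z : ℂ, Polynomial.aeval z Q = 0 → z.im = 0)
    (a b : ℝ) (hab : a < b)
    (ha : Q.eval a = 0) (ha' : (derivative Q).eval a ≠ 0)
    (hb : Q.eval b = 0) (hb' : (derivative Q).eval b ≠ 0)
    (hQpos : ∀ x ∈ Set.Ioo a b, 0 < Q.eval x)
    (hPQ : ∀ x ∈ Set.Ioo a b, (P.eval x) ^ 2 - Q.eval x < 0)
    (hcrit : ∀ α ∈ Set.Ioo a b, (derivative Q).eval α = 0 → f.eval α ≠ 0) :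
    ∃ s₀ : ℝ, ∀ s : ℝ, s₀ ≤ s →
      ∀ Pt Qt : ℝ[X], Pt = P * (X - C s) → Qt = Q * (X - C s) ^ 2 →
      ∃ ft gt : ℝ[X],
        ft.degree = ((m + 1 : ℕ) : WithBot ℕ) ∧
        gt.degree = ((n + 2 : ℕ) : WithBot ℕ) ∧
        2 * Qt * ft = 2 * Qt * derivative Pt + Pt * derivative Qt ∧
        2 * Qt * gt = derivative Qt * (Pt ^ 2 - Qt) ∧
        (∀ z : ℂ, Polynomial.aeval z Qt = 0 → z.im = 0) ∧
        Qt.eval a = 0 ∧ (derivative Qt).eval a ≠ 0 ∧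
        Qt.eval b = 0 ∧ (derivative Qt).eval b ≠ 0 ∧
        (∀ x ∈ Set.Ioo a b, 0 < Qt.eval x) ∧
        (∀ x ∈ Set.Ioo a b, (Pt.eval x) ^ 2 - Qt.eval x < 0) ∧
        (∀ α ∈ Set.Ioo a b, (derivative Qt).eval α = 0 → ft.eval α ≠ 0) := by
  classical
  have hf0 : f ≠ 0 := fun h => by simp [h] at hf
  have hg0 : g ≠ 0 := fun h => by simp [h] at hg
  have hP0 : P ≠ 0 := fun h => by
    rw [h, degree_zero] at hP; exact WithBot.bot_ne_coe hP
  have hQ0 : Q ≠ 0 := fun h => by simp [h] at ha'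
  have hnf : f.natDegree = m := natDegree_eq_of_degree_eq_some hf
  have hng : g.natDegree = n := natDegree_eq_of_degree_eq_some hg
  have hnP : P.natDegree = m + 1 := natDegree_eq_of_degree_eq_some hP
  set q := Q.natDegree with hqdef
  have hq1 : 1 ≤ q := by
    by_contra h
    have h0 : Q.natDegree = 0 := by omega
    have hC := Polynomial.eq_C_of_natDegree_eq_zero h0
    rw [hC] at ha
    simp at ha
    exact hQ0 (hC.trans (by rw [ha, map_zero]))
  have hQ'0 : derivative Q ≠ 0 := fun h => ha' (by rw [h]; simp)
  have hdQ' : (derivative Q).degree = ((q - 1 : ℕ) : WithBot ℕ) :=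
    degree_derivative_eq Q (by omega)
  have hnQ' : (derivative Q).natDegree = q - 1 := natDegree_eq_of_degree_eq_some hdQ'
  have hlcQ : Q.leadingCoeff ≠ 0 := leadingCoeff_ne_zero.2 hQ0
  have hlcP : P.leadingCoeff ≠ 0 := leadingCoeff_ne_zero.2 hP0
  have hlcQ' : (derivative Q).leadingCoeff = Q.leadingCoeff * q := by
    rw [leadingCoeff, hnQ', coeff_derivative]
    have hone : q - 1 + 1 = q := by omega
    rw [hone, coeff_natDegree, Nat.cast_sub hq1]
    push_cast; ring
  -- leading coefficient relation from the first identity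
  have hc1 : 2 * (Q.leadingCoeff * f.leadingCoeff)
      = 2 * (Q.leadingCoeff * (P.leadingCoeff * (m + 1)))
        + P.leadingCoeff * (Q.leadingCoeff * q) := by
    have h := congrArg (fun p : ℝ[X] => p.coeff (q + m)) hid1
    have e1 : (2 * Q * f).coeff (q + m) = 2 * (Q.leadingCoeff * f.leadingCoeff) := by
      have h2 : 2 * Q * f = Q * f + Q * f := by ring
      rw [h2, coeff_add, hqdef, ← hnf, coeff_mul_degree_add_degree]; ring
    have hdP' : (derivative P).degree = ((m : ℕ) : WithBot ℕ) := by
      have := degree_derivative_eq P (by omega)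
      rwa [hnP, Nat.add_sub_cancel] at this
    have hnP' : (derivative P).natDegree = m := natDegree_eq_of_degree_eq_some hdP'
    have hlcP' : (derivative P).leadingCoeff = P.leadingCoeff * (m + 1) := by
      rw [leadingCoeff, hnP', coeff_derivative, ← hnP, coeff_natDegree]
    have e2 : (2 * Q * derivative P).coeff (q + m)
        = 2 * (Q.leadingCoeff * (P.leadingCoeff * (m + 1))) := by
      have h2 : 2 * Q * derivative P = Q * derivative P + Q * derivative P := by ring
      rw [h2, coeff_add, hqdef, ← hnP', coeff_mul_degree_add_degree, hlcP']
      push_cast [hnP']; ring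
    have e3 : (P * derivative Q).coeff (q + m)
        = P.leadingCoeff * (Q.leadingCoeff * q) := by
      have h1 : q + m = P.natDegree + (derivative Q).natDegree := by omega
      rw [h1, coeff_mul_degree_add_degree, hlcQ']
    rw [e1, coeff_add, e2, e3] at h
    exact h
  have keyA : f.leadingCoeff + 2 * P.leadingCoeff ≠ 0 := by
    intro h0
    have hz : Q.leadingCoeff * (P.leadingCoeff * (2 * m + q + 6 : ℝ)) = 0 := by
      linear_combination 2 * Q.leadingCoeff * h0 - hc1
    rcases mul_eq_zero.1 hz with h | h
    · exact hlcQ h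
    · rcases mul_eq_zero.1 h with h | h
      · exact hlcP h
      · have : (0 : ℝ) < 2 * m + q + 6 := by positivity
        linarith
  -- the polynomial W = P² - Q
  have hWx : (P ^ 2 - Q).eval ((a + b) / 2) < 0 := by
    have hx : (a + b) / 2 ∈ Set.Ioo a b := ⟨by linarith, by linarith⟩
    simpa using hPQ _ hx
  have hW0 : P ^ 2 - Q ≠ 0 := fun h => by rw [h] at hWx; simp at hWx
  have hlcW : (P ^ 2 - Q).leadingCoeff ≠ 0 := leadingCoeff_ne_zero.2 hW0
  have hnW : (P ^ 2 - Q).natDegree = n + 1 := by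
    have h1 : (2 * Q * g).natDegree = q + n := by
      rw [natDegree_mul (mul_ne_zero two_ne_zero hQ0) hg0,
        natDegree_mul two_ne_zero hQ0, hng]
      simp
      exact hqdef.symm
    have h2 : (derivative Q * (P ^ 2 - Q)).natDegree
        = (q - 1) + (P ^ 2 - Q).natDegree := by
      rw [natDegree_mul hQ'0 hW0, hnQ']
    have h3 := h1.symm.trans (by rw [hid2, h2])
    omega
  -- leading coefficient relation from the second identity
  have hc2 : 2 * (Q.leadingCoeff * g.leadingCoeff)
      = Q.leadingCoeff * q * (P ^ 2 - Q).leadingCoeff := by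
    have h := congrArg (fun p : ℝ[X] => p.coeff (q + n)) hid2
    have e1 : (2 * Q * g).coeff (q + n) = 2 * (Q.leadingCoeff * g.leadingCoeff) := by
      have h2 : 2 * Q * g = Q * g + Q * g := by ring
      rw [h2, coeff_add, hqdef, ← hng, coeff_mul_degree_add_degree]; ring
    have e2 : (derivative Q * (P ^ 2 - Q)).coeff (q + n)
        = Q.leadingCoeff * q * (P ^ 2 - Q).leadingCoeff := by
      have h1 : q + n = (derivative Q).natDegree + (P ^ 2 - Q).natDegree := by omega
      rw [h1, coeff_mul_degree_add_degree, hlcQ']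
    rw [e1, e2] at h
    exact h
  have keyB : g.leadingCoeff + (P ^ 2 - Q).leadingCoeff ≠ 0 := by
    intro h0
    have hz : Q.leadingCoeff * ((P ^ 2 - Q).leadingCoeff * (q + 2 : ℝ)) = 0 := by
      linear_combination 2 * Q.leadingCoeff * h0 - hc2
    rcases mul_eq_zero.1 hz with h | h
    · exact hlcQ h
    · rcases mul_eq_zero.1 h with h | h
      · exact hlcW h
      · have : (0 : ℝ) < (q : ℝ) + 2 := by positivity
        linarith
  -- R ≠ 0 via Rolle
  have hR0 : P * derivative Q - f * Q ≠ 0 := by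
    obtain ⟨c, hc, hc'⟩ := exists_deriv_eq_zero hab Q.continuousOn (ha.trans hb.symm)
    rw [Polynomial.deriv] at hc'
    intro h
    have h' : P * derivative Q = f * Q := sub_eq_zero.1 h
    have h2 := congrArg (eval c) h'
    rw [eval_mul, eval_mul, hc', mul_zero] at h2
    exact (mul_ne_zero (hcrit c hc hc') (ne_of_gt (hQpos c hc))) h2.symm
  set R : ℝ[X] := P * derivative Q - f * Q with hRdef
  set T : Finset ℝ := R.roots.toFinset with hTdef
  set s₀ : ℝ := (insert (b + 1)
      (T.image fun α => 1 + α + 2 * Q.eval α / (derivative Q).eval α)).max'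
      (Finset.insert_nonempty _ _) with hs₀def
  refine ⟨s₀, fun s hs Pt Qt hPt hQt => ?_⟩
  subst hPt; subst hQt
  have hb1s : b + 1 ≤ s₀ := Finset.le_max' _ _ (Finset.mem_insert_self _ _)
  have hbs : b < s := by linarith
  -- derivative of Qt
  have hQt' : derivative (Q * (X - C s) ^ 2)
      = derivative Q * (X - C s) ^ 2 + Q * (2 * (X - C s)) := by
    simp only [derivative_mul, derivative_pow, derivative_sub, derivative_X, derivative_C,
      Nat.cast_ofNat, map_ofNat, sub_zero, mul_one]
    ring
  refine ⟨f * (X - C s) + C 2 * P, (g * (X - C s) + (P ^ 2 - Q)) * (X - C s),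
    ?_, ?_, ?_, ?_, ?_, ?_, ?_, ?_, ?_, ?_, ?_, ?_⟩
  · -- degree ft
    have hle : (f * (X - C s) + C 2 * P).degree ≤ ((m + 1 : ℕ) : WithBot ℕ) := by
      refine le_trans (degree_add_le _ _) (max_le ?_ ?_)
      · rw [degree_mul, degree_X_sub_C, hf]
        norm_cast
      · rw [← smul_eq_C_mul]
        exact (degree_smul_le _ _).trans hP.le
    have hco : (f * (X - C s) + C 2 * P).coeff (m + 1)
        = f.leadingCoeff + 2 * P.leadingCoeff := by
      have hfc : f.coeff (m + 1) = 0 := coeff_eq_zero_of_natDegree_lt (by omega)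
      have hfm : f.coeff m = f.leadingCoeff := by rw [← hnf, coeff_natDegree]
      have hPm : P.coeff (m + 1) = P.leadingCoeff := by rw [← hnP, coeff_natDegree]
      rw [coeff_add, mul_sub, coeff_sub, coeff_mul_X, coeff_mul_C, coeff_C_mul,
        hfc, hfm, hPm]
      ring
    exact degree_eq_of_le_of_coeff_ne_zero hle (by rw [hco]; exact keyA)
  · -- degree gt
    have hle : (g * (X - C s) + (P ^ 2 - Q)).degree ≤ ((n + 1 : ℕ) : WithBot ℕ) := by
      refine le_trans (degree_add_le _ _) (max_le ?_ ?_)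
      · rw [degree_mul, degree_X_sub_C, hg]
        norm_cast
      · rw [degree_eq_natDegree hW0, hnW]
    have hco : (g * (X - C s) + (P ^ 2 - Q)).coeff (n + 1)
        = g.leadingCoeff + (P ^ 2 - Q).leadingCoeff := by
      have hgc : g.coeff (n + 1) = 0 := coeff_eq_zero_of_natDegree_lt (by omega)
      have hgm : g.coeff n = g.leadingCoeff := by rw [← hng, coeff_natDegree]
      have hWm : (P ^ 2 - Q).coeff (n + 1) = (P ^ 2 - Q).leadingCoeff := by
        rw [← hnW, coeff_natDegree]
      rw [coeff_add, mul_sub, coeff_sub, coeff_mul_X, coeff_mul_C, hgc, hgm, hWm]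
      ring
    have hinner : (g * (X - C s) + (P ^ 2 - Q)).degree = ((n + 1 : ℕ) : WithBot ℕ) :=
      degree_eq_of_le_of_coeff_ne_zero hle (by rw [hco]; exact keyB)
    rw [degree_mul, hinner, degree_X_sub_C]
    norm_cast
  · -- identity 1
    simp only [derivative_mul, derivative_pow, derivative_sub, derivative_X, derivative_C,
      sub_zero, mul_one, Nat.cast_ofNat, map_ofNat]
    linear_combination (X - C s) ^ 3 * hid1
  · -- identity 2
    simp only [derivative_mul, derivative_pow, derivative_sub, derivative_X, derivative_C,
      sub_zero, mul_one, Nat.cast_ofNat, map_ofNat]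
    linear_combination (X - C s) ^ 4 * hid2
  · -- real roots
    intro z hz
    rw [map_mul, map_pow, map_sub, aeval_X, aeval_C] at hz
    rcases mul_eq_zero.1 hz with h | h
    · exact hreal z h
    · have hzs := sub_eq_zero.1 ((pow_eq_zero_iff (two_ne_zero)).1 h)
      rw [hzs]
      simp
  · simp [ha]
  · rw [hQt']
    simp only [eval_add, eval_mul, eval_pow, eval_sub, eval_X, eval_C, ha, zero_mul, add_zero]
    exact mul_ne_zero ha' (pow_ne_zero _ (sub_ne_zero.2 (by linarith)))
  · simp [hb]
  · rw [hQt']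
    simp only [eval_add, eval_mul, eval_pow, eval_sub, eval_X, eval_C, hb, zero_mul, add_zero]
    exact mul_ne_zero hb' (pow_ne_zero _ (sub_ne_zero.2 (by linarith)))
  · intro x hx
    simp only [eval_mul, eval_pow, eval_sub, eval_X, eval_C]
    have hxs : x - s < 0 := by linarith [hx.2]
    have h2 : 0 < (x - s) ^ 2 := by
      rw [pow_two]; exact mul_pos_of_neg_of_neg hxs hxs
    exact mul_pos (hQpos x hx) h2
  · intro x hx
    simp only [eval_mul, eval_pow, eval_sub, eval_X, eval_C]
    have hxs : x - s < 0 := by linarith [hx.2]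
    have h2 : 0 < (x - s) ^ 2 := by
      rw [pow_two]; exact mul_pos_of_neg_of_neg hxs hxs
    have hrw : (P.eval x * (x - s)) ^ 2 - Q.eval x * (x - s) ^ 2
        = (x - s) ^ 2 * ((P.eval x) ^ 2 - Q.eval x) := by ring
    rw [hrw]
    exact mul_neg_of_pos_of_neg h2 (hPQ x hx)
  · -- critical points of Qt
    intro α hα hval hft0
    have hαs : α - s < 0 := by linarith [hα.2]
    have hne : α - s ≠ 0 := ne_of_lt hαs
    rw [hQt'] at hval
    simp only [eval_add, eval_mul, eval_pow, eval_sub, eval_X, eval_C, eval_ofNat] at hval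
    have h1 : (derivative Q).eval α * (α - s) + 2 * Q.eval α = 0 := by
      have hfac : (α - s) * ((derivative Q).eval α * (α - s) + 2 * Q.eval α) = 0 := by
        linear_combination hval
      rcases mul_eq_zero.1 hfac with h | h
      · exact absurd h hne
      · exact h
    have h2 : f.eval α * (α - s) + 2 * P.eval α = 0 := by
      simpa using hft0
    have hQ'α : (derivative Q).eval α ≠ 0 := by
      intro h
      rw [h, zero_mul, zero_add] at h1
      linarith [hQpos α hα]
    have hRα : R.eval α = 0 := by
      rw [hRdef]
      simp only [eval_sub, eval_mul]
      linear_combination ((derivative Q).eval α * h2 - f.eval α * h1) / 2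
    have hmem : α ∈ T := by
      rw [hTdef, Multiset.mem_toFinset, mem_roots hR0]
      exact hRα
    have hle : 1 + α + 2 * Q.eval α / (derivative Q).eval α ≤ s₀ := by
      rw [hs₀def]
      refine Finset.le_max' _ _ (Finset.mem_insert_of_mem ?_)
      exact Finset.mem_image_of_mem (fun β => 1 + β + 2 * Q.eval β / (derivative Q).eval β) hmem
    have hs' : s = α + 2 * Q.eval α / (derivative Q).eval α := by
      field_simp
      linear_combination -h1
    rw [hs'] at hs
    linarith
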